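/- Let α > 0, h > 0, z = αh with z ≠ 1, and define F : ℝ² → ℝ² by F(p, q) = (α·p·(1 − p), α·(2p − 1)·q/(1 + z − 2z·p)) on the set where 1 + z − 2z·p ≠ 0. Then F(0,0) = F(1,0) = (0,0), the Jacobian matrix of F at (0, 0) is diag(α, −α/(1 + z)), and the Jacobian matrix of F at (1, 0) is diag(−α, α/(1 − z)). Moreover, the eigenvalues of both Jacobians are real, nonzero, and of opposite signs (i.e., both fixed points are hyperbolic saddles) if and only if 0 < z < 1. -/

import Mathlib

open ContinuousLinearMap

lemma aux_first (α p₀ q₀ : ℝ) :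
    HasFDerivAt (fun x : ℝ × ℝ => α * x.1 * (1 - x.1))
      ((α * (1 - 2 * p₀)) • ContinuousLinearMap.fst ℝ ℝ ℝ) (p₀, q₀) := by
  have hfun : (fun x : ℝ × ℝ => α * x.1 * (1 - x.1)) =
      fun x : ℝ × ℝ => (α * x.1 - α * (x.1 * x.1)) := by funext x; ring
  rw [hfun]
  have h1 : HasFDerivAt (fun x : ℝ × ℝ => α * x.1) (α • ContinuousLinearMap.fst ℝ ℝ ℝ)
      (p₀, q₀) := (hasFDerivAt_fst).const_mul α
  have h2 := HasFDerivAt.mul (𝕜 := ℝ)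
    (hasFDerivAt_fst (𝕜 := ℝ) (p := ((p₀, q₀) : ℝ × ℝ)) (F := ℝ)) hasFDerivAt_fst
  have h3 := h1.sub (h2.const_mul α)
  have heq : α • ContinuousLinearMap.fst ℝ ℝ ℝ -
      α • (((p₀, q₀) : ℝ × ℝ).1 • ContinuousLinearMap.fst ℝ ℝ ℝ +
        ((p₀, q₀) : ℝ × ℝ).1 • ContinuousLinearMap.fst ℝ ℝ ℝ) =
      (α * (1 - 2 * p₀)) • ContinuousLinearMap.fst ℝ ℝ ℝ := by
    refine ContinuousLinearMap.ext fun v => ?_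
    simp only [ContinuousLinearMap.coe_sub', ContinuousLinearMap.coe_smul',
      ContinuousLinearMap.add_apply, ContinuousLinearMap.smul_apply, Pi.sub_apply,
      Pi.smul_apply, ContinuousLinearMap.coe_fst', smul_eq_mul]
    ring
  rwa [heq] at h3

lemma aux_second (α z p₀ : ℝ) (hD : 1 + z - 2 * z * p₀ ≠ 0) :
    HasFDerivAt (fun x : ℝ × ℝ => α * (2 * x.1 - 1) * x.2 / (1 + z - 2 * z * x.1))
      ((α * (2 * p₀ - 1) / (1 + z - 2 * z * p₀)) • ContinuousLinearMap.snd ℝ ℝ ℝ) (p₀, 0) := by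
  have hfun : (fun x : ℝ × ℝ => α * (2 * x.1 - 1) * x.2 / (1 + z - 2 * z * x.1)) =
      fun x : ℝ × ℝ => (α * (2 * x.1 - 1) / (1 + z - 2 * z * x.1)) * x.2 := by
    funext x; ring
  rw [hfun]
  have hD' : (1 : ℝ) + z - 2 * z * ((p₀, (0:ℝ)) : ℝ × ℝ).1 ≠ 0 := hD
  have hc : DifferentiableAt ℝ
      (fun x : ℝ × ℝ => α * (2 * x.1 - 1) / (1 + z - 2 * z * x.1)) (p₀, 0) := by
    simp only [div_eq_mul_inv]
    have hden : DifferentiableAt ℝ (fun x : ℝ × ℝ => 1 + z - 2 * z * x.1) (p₀, 0) := by fun_prop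
    have hnum : DifferentiableAt ℝ (fun x : ℝ × ℝ => α * (2 * x.1 - 1)) (p₀, 0) := by fun_prop
    exact hnum.mul (hden.inv hD')
  have hmul := hc.hasFDerivAt.mul hasFDerivAt_snd
  have h2 : (((p₀, (0:ℝ)) : ℝ × ℝ)).2 = 0 := rfl
  rw [h2, zero_smul, add_zero] at hmul
  exact hmul

/-- The right-hand side `F` of the symplectic Euler discretization of
`ṗ = αp(1 − p), q̇ = α(2p − 1)q` has fixed points `(0,0)` and `(1,0)`, with Jacobians
`diag(α, −α/(1 + z))` and `diag(−α, α/(1 − z))`; both are hyperbolic saddles (real,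
nonzero eigenvalues of opposite signs) iff `0 < z < 1`. -/
theorem euler_logistic_saddles
    (α h : ℝ) (hα : 0 < α) (hh : 0 < h) (z : ℝ) (hz : z = α * h) (hz1 : z ≠ 1)
    (F : ℝ × ℝ → ℝ × ℝ)
    (hF : ∀ x : ℝ × ℝ, 1 + z - 2 * z * x.1 ≠ 0 →
      F x = (α * x.1 * (1 - x.1), α * (2 * x.1 - 1) * x.2 / (1 + z - 2 * z * x.1))) :
    F (0, 0) = (0, 0) ∧ F (1, 0) = (0, 0) ∧
    HasFDerivAt F
      ((α • ContinuousLinearMap.fst ℝ ℝ ℝ).prod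
        ((-α / (1 + z)) • ContinuousLinearMap.snd ℝ ℝ ℝ)) (0, 0) ∧
    HasFDerivAt F
      (((-α) • ContinuousLinearMap.fst ℝ ℝ ℝ).prod
        ((α / (1 - z)) • ContinuousLinearMap.snd ℝ ℝ ℝ)) (1, 0) ∧
    ((α ≠ 0 ∧ -α / (1 + z) ≠ 0 ∧ α * (-α / (1 + z)) < 0 ∧
        -α ≠ 0 ∧ α / (1 - z) ≠ 0 ∧ (-α) * (α / (1 - z)) < 0) ↔
      (0 < z ∧ z < 1)) := by
  have hzpos : 0 < z := by rw [hz]; positivity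
  have h1z : (0:ℝ) < 1 + z := by linarith
  have hD0 : 1 + z - 2 * z * (((0:ℝ), (0:ℝ)) : ℝ × ℝ).1 ≠ 0 := by
    simp only; intro hcon; norm_num at hcon; linarith
  have hD1 : 1 + z - 2 * z * (((1:ℝ), (0:ℝ)) : ℝ × ℝ).1 ≠ 0 := by
    simp only; intro hcon; apply hz1; nlinarith [hcon]
  set G : ℝ × ℝ → ℝ × ℝ := fun x =>
    (α * x.1 * (1 - x.1), α * (2 * x.1 - 1) * x.2 / (1 + z - 2 * z * x.1)) with hG
  have hcont : Continuous (fun x : ℝ × ℝ => 1 + z - 2 * z * x.1) := by continuity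
  have hev : ∀ pt : ℝ × ℝ, 1 + z - 2 * z * pt.1 ≠ 0 → F =ᶠ[nhds pt] G := by
    intro pt hpt
    have : ∀ᶠ x : ℝ × ℝ in nhds pt, 1 + z - 2 * z * x.1 ≠ 0 :=
      hcont.continuousAt.eventually_ne hpt
    exact this.mono fun x hx => hF x hx
  have hderiv0 : HasFDerivAt G
      ((α • ContinuousLinearMap.fst ℝ ℝ ℝ).prod
        ((-α / (1 + z)) • ContinuousLinearMap.snd ℝ ℝ ℝ)) (0, 0) := by
    have e : ((α • ContinuousLinearMap.fst ℝ ℝ ℝ).prod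
        ((-α / (1 + z)) • ContinuousLinearMap.snd ℝ ℝ ℝ)) =
        (((α * (1 - 2 * (0:ℝ))) • ContinuousLinearMap.fst ℝ ℝ ℝ).prod
        ((α * (2 * (0:ℝ) - 1) / (1 + z - 2 * z * 0)) • ContinuousLinearMap.snd ℝ ℝ ℝ)) := by
      norm_num
    rw [e]
    exact (aux_first α 0 0).prodMk (aux_second α z 0 (by simpa using hD0))
  have hderiv1 : HasFDerivAt G
      (((-α) • ContinuousLinearMap.fst ℝ ℝ ℝ).prod
        ((α / (1 - z)) • ContinuousLinearMap.snd ℝ ℝ ℝ)) (1, 0) := by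
    have e : (((-α) • ContinuousLinearMap.fst ℝ ℝ ℝ).prod
        ((α / (1 - z)) • ContinuousLinearMap.snd ℝ ℝ ℝ)) =
        (((α * (1 - 2 * (1:ℝ))) • ContinuousLinearMap.fst ℝ ℝ ℝ).prod
        ((α * (2 * (1:ℝ) - 1) / (1 + z - 2 * z * 1)) • ContinuousLinearMap.snd ℝ ℝ ℝ)) := by
      norm_num
      congr 2
      ring
    rw [e]
    exact (aux_first α 1 0).prodMk (aux_second α z 1 (by simpa using hD1))
  refine ⟨?_, ?_, ?_, ?_, ?_⟩
  · rw [hF _ hD0]; norm_num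
  · rw [hF _ hD1]; norm_num
  · exact hderiv0.congr_of_eventuallyEq (hev _ hD0)
  · exact hderiv1.congr_of_eventuallyEq (hev _ hD1)
  · constructor
    · rintro ⟨-, -, -, -, -, h6⟩
      refine ⟨hzpos, ?_⟩
      by_contra hle
      push_neg at hle
      have h1zneg : 1 - z < 0 := by
        rcases lt_or_eq_of_le hle with h' | h'
        · linarith
        · exact absurd h'.symm hz1
      have : α / (1 - z) < 0 := div_neg_of_pos_of_neg hα h1zneg
      nlinarith
    · rintro ⟨hz0, hz1'⟩
      have h1zp : (0:ℝ) < 1 - z := by linarith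
      refine ⟨ne_of_gt hα, ?_, ?_, ?_, ?_, ?_⟩
      · exact ne_of_lt (div_neg_of_neg_of_pos (by linarith) h1z)
      · have : -α / (1 + z) < 0 := div_neg_of_neg_of_pos (by linarith) h1z
        nlinarith
      · exact ne_of_lt (by linarith)
      · exact ne_of_gt (div_pos hα h1zp)
      · have : 0 < α / (1 - z) := div_pos hα h1zp
        nlinarith
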